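/- arXiv:2403.17871 — 3 statements merged into one kernel-verified Lean document; each statement's English description precedes it below -/
import Mathlib

section
/- Let Γ be a connected graph, and let Γ⁰, Γ′, Γ″ be nontrivial biconnected subgraphs with Γ′ ∩ Γ″ = ∅ and Γ⁰ the induced subgraph on V(Γ′) ∪ V(Γ″). Write e = val(Γ⁰), e′ = val(Γ′), e″ = val(Γ″), h = g(Γ⁰), h′ = g(Γ′), h″ = g(Γ″). Then 2(h + 1 − (h′ + h″)) = e′ + e″ − e, and the strict triangle inequalities e < e′ + e″, e′ < e″ + e, e″ < e′ + e hold. -/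
open Finset

/-- The edges of the multigraph `ends : E → V × V` joining `S` to its
complement. -/
def crossEdges {V E : Type} [Fintype E] [DecidableEq V]
    (ends : E → V × V) (S : Finset V) : Finset E :=
  univ.filter fun e =>
    ((ends e).1 ∈ S ∧ (ends e).2 ∉ S) ∨ ((ends e).1 ∉ S ∧ (ends e).2 ∈ S)

/-- The valence `val(S)` of a vertex subset: the number of edges joining `S`
to its complement. -/
def valS {V E : Type} [Fintype E] [DecidableEq V]
    (ends : E → V × V) (S : Finset V) : ℕ :=
  (crossEdges ends S).card

/-- The edges with both endpoints in `S`. -/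
def intEdges {V E : Type} [Fintype E] [DecidableEq V]
    (ends : E → V × V) (S : Finset V) : Finset E :=
  univ.filter fun e => (ends e).1 ∈ S ∧ (ends e).2 ∈ S

/-- The genus of the induced subgraph on `S` (for `S` connected):
`g(S) = |E(S)| - |S| + 1 + Σ_{v ∈ S} gen v`. -/
def genusS {V E : Type} [Fintype E] [DecidableEq V]
    (ends : E → V × V) (gen : V → ℤ) (S : Finset V) : ℤ :=
  ((intEdges ends S).card : ℤ) - (S.card : ℤ) + 1 + ∑ v ∈ S, gen v

/-- The valence of a single vertex (loops counted twice). -/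
def degV {V E : Type} [Fintype E] [DecidableEq V]
    (ends : E → V × V) (v : V) : ℕ :=
  ∑ e : E, ((if (ends e).1 = v then 1 else 0) + (if (ends e).2 = v then 1 else 0))

/-- `Conn ends S F`: any two vertices of `S` are joined by a walk inside `S`
using only edges from `F`. -/
def Conn {V E : Type} (ends : E → V × V) (S : Finset V) (F : Finset E) : Prop :=
  ∀ a ∈ S, ∀ b ∈ S, Relation.ReflTransGen
    (fun x y => x ∈ S ∧ y ∈ S ∧ ∃ e ∈ F, ends e = (x, y) ∨ ends e = (y, x)) a b

lemma exists_cross_edge {V E : Type} (ends : E → V × V)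
    (S A : Finset V) (F : Finset E) (hc : Conn ends S F)
    {a b : V} (ha : a ∈ A) (haS : a ∈ S) (hb : b ∈ S) (hbA : b ∉ A) :
    ∃ e ∈ F, ((ends e).1 ∈ A ∧ (ends e).2 ∈ S ∧ (ends e).2 ∉ A) ∨
             ((ends e).2 ∈ A ∧ (ends e).1 ∈ S ∧ (ends e).1 ∉ A) := by
  have H : ∀ x, Relation.ReflTransGen
      (fun x y => x ∈ S ∧ y ∈ S ∧ ∃ e ∈ F, ends e = (x, y) ∨ ends e = (y, x)) x b →
      x ∈ A → ∃ e ∈ F, ((ends e).1 ∈ A ∧ (ends e).2 ∈ S ∧ (ends e).2 ∉ A) ∨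
             ((ends e).2 ∈ A ∧ (ends e).1 ∈ S ∧ (ends e).1 ∉ A) := by
    intro x hx
    induction hx using Relation.ReflTransGen.head_induction_on with
    | refl => exact fun hxA => absurd hxA hbA
    | @head x c step rest ih =>
      intro hxA
      obtain ⟨hxS, hcS, e, heF, he⟩ := step
      by_cases hcA : c ∈ A
      · exact ih hcA
      · refine ⟨e, heF, ?_⟩
        rcases he with he | he
        · left; rw [he]; exact ⟨hxA, hcS, hcA⟩
        · right; rw [he]; exact ⟨hxA, hcS, hcA⟩
  exact H a (hc a haS b hb) ha

/-- for disjoint nontrivial biconnected subgraphs `S'`, `S''` of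
a connected graph with `S⁰ = S' ∪ S''` nontrivial and biconnected, writing
`e = val(S⁰)`, `e' = val(S')`, `e'' = val(S'')`, `h = g(S⁰)`, `h' = g(S')`,
`h'' = g(S'')`, one has `2(h + 1 - (h' + h'')) = e' + e'' - e` and the strict
triangle inequalities. -/
theorem triangle_relation_for_subgraphs
    {V E : Type} [Fintype V] [Fintype E] [DecidableEq V] [DecidableEq E]
    (ends : E → V × V) (gen : V → ℤ)
    (hconn : Conn ends (univ : Finset V) (univ : Finset E))
    (S' S'' : Finset V) (hdisj : Disjoint S' S'')
    (hne' : S'.Nonempty) (hne'' : S''.Nonempty)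
    (hnu' : S' ≠ univ) (hnu'' : S'' ≠ univ) (hnu0 : S' ∪ S'' ≠ univ)
    (hc' : Conn ends S' (univ : Finset E))
    (hc'c : Conn ends S'ᶜ (univ : Finset E))
    (hc'' : Conn ends S'' (univ : Finset E))
    (hc''c : Conn ends S''ᶜ (univ : Finset E))
    (hc0 : Conn ends (S' ∪ S'') (univ : Finset E))
    (hc0c : Conn ends (S' ∪ S'')ᶜ (univ : Finset E)) :
    2 * (genusS ends gen (S' ∪ S'') + 1 - (genusS ends gen S' + genusS ends gen S''))
        = (valS ends S' : ℤ) + (valS ends S'' : ℤ) - (valS ends (S' ∪ S'') : ℤ) ∧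
    (valS ends (S' ∪ S'') : ℤ) < (valS ends S' : ℤ) + (valS ends S'' : ℤ) ∧
    (valS ends S' : ℤ) < (valS ends S'' : ℤ) + (valS ends (S' ∪ S'') : ℤ) ∧
    (valS ends S'' : ℤ) < (valS ends S' : ℤ) + (valS ends (S' ∪ S'') : ℤ) := by
  classical
  have hdl := Finset.disjoint_left.mp hdisj
  -- indicator functions
  set C : Finset V → E → ℕ := fun S e =>
    if ((ends e).1 ∈ S ∧ (ends e).2 ∉ S) ∨ ((ends e).1 ∉ S ∧ (ends e).2 ∈ S) then 1 else 0
    with hC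
  set I : Finset V → E → ℕ := fun S e =>
    if (ends e).1 ∈ S ∧ (ends e).2 ∈ S then 1 else 0 with hI
  set B : E → ℕ := fun e =>
    if ((ends e).1 ∈ S' ∧ (ends e).2 ∈ S'') ∨ ((ends e).1 ∈ S'' ∧ (ends e).2 ∈ S')
    then 1 else 0 with hB
  set B' : E → ℕ := fun e =>
    if ((ends e).1 ∈ S' ∧ ((ends e).2 ∉ S' ∧ (ends e).2 ∉ S''))
      ∨ (((ends e).1 ∉ S' ∧ (ends e).1 ∉ S'') ∧ (ends e).2 ∈ S') then 1 else 0 with hB'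
  set B'' : E → ℕ := fun e =>
    if ((ends e).1 ∈ S'' ∧ ((ends e).2 ∉ S' ∧ (ends e).2 ∉ S''))
      ∨ (((ends e).1 ∉ S' ∧ (ends e).1 ∉ S'') ∧ (ends e).2 ∈ S'') then 1 else 0 with hB''
  have hval : ∀ S : Finset V, valS ends S = ∑ e, C S e := by
    intro S; simp only [valS, crossEdges, hC]; exact Finset.card_filter _ _
  have hint : ∀ S : Finset V, (intEdges ends S).card = ∑ e, I S e := by
    intro S; simp only [intEdges, hI]; exact Finset.card_filter _ _
  -- per-edge identities
  have key : ∀ e : E,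
      C S' e + C S'' e = C (S' ∪ S'') e + 2 * B e ∧
      C S'' e + C (S' ∪ S'') e = C S' e + 2 * B'' e ∧
      C S' e + C (S' ∪ S'') e = C S'' e + 2 * B' e ∧
      I (S' ∪ S'') e = I S' e + I S'' e + B e := by
    intro e
    by_cases h1 : (ends e).1 ∈ S' <;> by_cases h2 : (ends e).1 ∈ S'' <;>
      by_cases h3 : (ends e).2 ∈ S' <;> by_cases h4 : (ends e).2 ∈ S''
    all_goals first
      | exact absurd h2 (hdl h1)
      | exact absurd h4 (hdl h3)
      | simp [hC, hI, hB, hB', hB'', Finset.mem_union, h1, h2, h3, h4]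
  -- summed identities
  have sum1 : valS ends S' + valS ends S'' = valS ends (S' ∪ S'') + 2 * ∑ e, B e := by
    rw [hval, hval, hval, Finset.mul_sum, ← Finset.sum_add_distrib, ← Finset.sum_add_distrib]
    exact Finset.sum_congr rfl fun e _ => (key e).1
  have sum2 : valS ends S'' + valS ends (S' ∪ S'') = valS ends S' + 2 * ∑ e, B'' e := by
    rw [hval, hval, hval, Finset.mul_sum, ← Finset.sum_add_distrib, ← Finset.sum_add_distrib]
    exact Finset.sum_congr rfl fun e _ => (key e).2.1
  have sum3 : valS ends S' + valS ends (S' ∪ S'') = valS ends S'' + 2 * ∑ e, B' e := by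
    rw [hval, hval, hval, Finset.mul_sum, ← Finset.sum_add_distrib, ← Finset.sum_add_distrib]
    exact Finset.sum_congr rfl fun e _ => (key e).2.2.1
  have sumI : (intEdges ends (S' ∪ S'')).card
      = (intEdges ends S').card + (intEdges ends S'').card + ∑ e, B e := by
    rw [hint, hint, hint, ← Finset.sum_add_distrib, ← Finset.sum_add_distrib]
    exact Finset.sum_congr rfl fun e _ => (key e).2.2.2
  -- existence of crossing edges
  obtain ⟨a', ha'⟩ := hne'
  obtain ⟨a'', ha''⟩ := hne''
  have ht : ∃ t, t ∉ S' ∪ S'' := by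
    by_contra h
    push_neg at h
    exact hnu0 (Finset.eq_univ_iff_forall.mpr h)
  obtain ⟨t, htm⟩ := ht
  have ht' : t ∉ S' := fun h => htm (Finset.mem_union_left _ h)
  have ht'' : t ∉ S'' := fun h => htm (Finset.mem_union_right _ h)
  -- B positive
  have hBpos : 1 ≤ ∑ e, B e := by
    obtain ⟨e, -, he⟩ := exists_cross_edge ends (S' ∪ S'') S' univ hc0 ha'
      (Finset.mem_union_left _ ha') (Finset.mem_union_right _ ha'') (fun h => hdl h ha'')
    have hBe : B e = 1 := by
      rcases he with ⟨h1, h2, h3⟩ | ⟨h1, h2, h3⟩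
      · have : (ends e).2 ∈ S'' := by rcases Finset.mem_union.mp h2 with h | h; exact absurd h h3; exact h
        simp [hB, h1, this]
      · have : (ends e).1 ∈ S'' := by rcases Finset.mem_union.mp h2 with h | h; exact absurd h h3; exact h
        simp [hB, h1, this]
    calc 1 = B e := hBe.symm
      _ ≤ ∑ e, B e := Finset.single_le_sum (fun _ _ => Nat.zero_le _) (Finset.mem_univ e)
  -- B' positive: edge from S' to the outside T, via connectivity of S''ᶜ
  have hB'pos : 1 ≤ ∑ e, B' e := by
    obtain ⟨e, -, he⟩ := exists_cross_edge ends S''ᶜ S' univ hc''c ha'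
      (Finset.mem_compl.mpr (fun h => hdl ha' h)) (Finset.mem_compl.mpr ht'') ht'
    have hBe : B' e = 1 := by
      rcases he with ⟨h1, h2, h3⟩ | ⟨h1, h2, h3⟩
      · simp [hB', h1, h3, Finset.mem_compl.mp h2]
      · simp [hB', h1, h3, Finset.mem_compl.mp h2]
    calc 1 = B' e := hBe.symm
      _ ≤ ∑ e, B' e := Finset.single_le_sum (fun _ _ => Nat.zero_le _) (Finset.mem_univ e)
  have hB''pos : 1 ≤ ∑ e, B'' e := by
    obtain ⟨e, -, he⟩ := exists_cross_edge ends S'ᶜ S'' univ hc'c ha''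
      (Finset.mem_compl.mpr (fun h => hdl h ha'')) (Finset.mem_compl.mpr ht') ht''
    have hBe : B'' e = 1 := by
      rcases he with ⟨h1, h2, h3⟩ | ⟨h1, h2, h3⟩
      · simp [hB'', h1, h3, Finset.mem_compl.mp h2]
      · simp [hB'', h1, h3, Finset.mem_compl.mp h2]
    calc 1 = B'' e := hBe.symm
      _ ≤ ∑ e, B'' e := Finset.single_le_sum (fun _ _ => Nat.zero_le _) (Finset.mem_univ e)
  -- genus identity
  have hcard : (S' ∪ S'').card = S'.card + S''.card := Finset.card_union_of_disjoint hdisj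
  have hgsum : ∑ v ∈ S' ∪ S'', gen v = ∑ v ∈ S', gen v + ∑ v ∈ S'', gen v :=
    Finset.sum_union hdisj
  have hgen : genusS ends gen (S' ∪ S'')
      = genusS ends gen S' + genusS ends gen S'' + (∑ e, B e : ℕ) - 1 := by
    simp only [genusS, sumI, hcard, hgsum]
    push_cast
    ring
  -- cast the nat sums to ℤ
  have sum1' : (valS ends S' : ℤ) + valS ends S''
      = valS ends (S' ∪ S'') + 2 * (∑ e, B e : ℕ) := by exact_mod_cast sum1
  have sum2' : (valS ends S'' : ℤ) + valS ends (S' ∪ S'')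
      = valS ends S' + 2 * (∑ e, B'' e : ℕ) := by exact_mod_cast sum2
  have sum3' : (valS ends S' : ℤ) + valS ends (S' ∪ S'')
      = valS ends S'' + 2 * (∑ e, B' e : ℕ) := by exact_mod_cast sum3
  have hBpos' : (1 : ℤ) ≤ (∑ e, B e : ℕ) := by exact_mod_cast hBpos
  have hB'pos' : (1 : ℤ) ≤ (∑ e, B' e : ℕ) := by exact_mod_cast hB'pos
  have hB''pos' : (1 : ℤ) ≤ (∑ e, B'' e : ℕ) := by exact_mod_cast hB''pos
  refine ⟨?_, ?_, ?_, ?_⟩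
  · rw [hgen]; linarith [sum1']
  · linarith [sum1', hBpos']
  · linarith [sum3', hB'pos']
  · linarith [sum2', hB''pos']
end

section
/- There is no real-valued function φ on singletons {1},…,{6} (extended additively to subsets of [6]) such that simultaneously ⌈(2 + φ_{123} − φ_{456})/2⌉ = 1, ⌈(2 + φ_{156} − φ_{234})/2⌉ = 1, ⌈(2 + φ_{345} − φ_{126})/2⌉ = 1, ⌈(2 + φ_{125} − φ_{346})/2⌉ = 2, ⌈(2 + φ_{134} − φ_{256})/2⌉ = 2, and ⌈(2 + φ_{356} − φ_{124})/2⌉ = 2, where φ_S = Σ_{i∈S} φ_{{i}}. -/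
/-- the non-classicality computation of Example ex26 (type (2,6)).
`f i` is `φ_{{i+1}}`, and `φ_S` is the sum over `S`. -/
theorem ex26_no_classical_phi :
    ¬ ∃ f : Fin 6 → ℝ,
      ⌈(2 + (f 0 + f 1 + f 2) - (f 3 + f 4 + f 5)) / 2⌉ = 1 ∧
      ⌈(2 + (f 0 + f 4 + f 5) - (f 1 + f 2 + f 3)) / 2⌉ = 1 ∧
      ⌈(2 + (f 2 + f 3 + f 4) - (f 0 + f 1 + f 5)) / 2⌉ = 1 ∧
      ⌈(2 + (f 0 + f 1 + f 4) - (f 2 + f 3 + f 5)) / 2⌉ = 2 ∧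
      ⌈(2 + (f 0 + f 2 + f 3) - (f 1 + f 4 + f 5)) / 2⌉ = 2 ∧
      ⌈(2 + (f 2 + f 4 + f 5) - (f 0 + f 1 + f 3)) / 2⌉ = 2 := by
  rintro ⟨f, h1, h2, h3, h4, h5, h6⟩
  have u1 := (Int.ceil_le.mp h1.le)
  have u2 := (Int.ceil_le.mp h2.le)
  have u3 := (Int.ceil_le.mp h3.le)
  have l4 : (1:ℝ) < (2 + (f 0 + f 1 + f 4) - (f 2 + f 3 + f 5)) / 2 := by
    have h : (1:ℤ) < ⌈(2 + (f 0 + f 1 + f 4) - (f 2 + f 3 + f 5)) / 2⌉ := by rw [h4]; norm_num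
    exact_mod_cast Int.lt_ceil.mp h
  have l5 : (1:ℝ) < (2 + (f 0 + f 2 + f 3) - (f 1 + f 4 + f 5)) / 2 := by
    have h : (1:ℤ) < ⌈(2 + (f 0 + f 2 + f 3) - (f 1 + f 4 + f 5)) / 2⌉ := by rw [h5]; norm_num
    exact_mod_cast Int.lt_ceil.mp h
  have l6 : (1:ℝ) < (2 + (f 2 + f 4 + f 5) - (f 0 + f 1 + f 3)) / 2 := by
    have h : (1:ℤ) < ⌈(2 + (f 2 + f 4 + f 5) - (f 0 + f 1 + f 3)) / 2⌉ := by rw [h6]; norm_num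
    exact_mod_cast Int.lt_ceil.mp h
  push_cast at u1 u2 u3 l4 l5 l6
  linarith
end

section
/- Let d, g be integers with g ≥ 2 and let m : D → ℤ be a function on triples (e,h,A) satisfying: (i) m(e,h,A) + m(e, g+1−e−h, Aᶜ) = d+1−e whenever both triples are in the domain, and (ii) 2m(3,0,∅) ≤ m(4,0,∅) ≤ 2m(3,0,∅) + 1 and the complementarity relation m(4,0,{1}) = d − 3 − m(4,0,∅) with m(2,0,{1}) + m(4,0,∅) ≤ m(4,0,{1}) ≤ m(2,0,{1}) + m(4,0,∅) + 1. Write A = m(2,0,{1}), B₀ = m(3,0,∅), C = m(4,0,∅). Then: if d − A ≡ 0 mod 4 then (C, B₀) = ((d−A−4)/2, (d−A−4)/4); if d − A ≡ 1 mod 4 then (C, B₀) = ((d−A−3)/2, (d−A−5)/4); if d − A ≡ 2 mod 4 then (C, B₀) = ((d−A−4)/2, (d−A−6)/4); if d − A ≡ 3 mod 4 then (C, B₀) = ((d−A−3)/2, (d−A−3)/4). -/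
/-- The stability domain `D_{g,n}` of vine-graph triples `(e,h,A)`. -/
def StabDom (g : ℤ) (n : ℕ) (e h : ℤ) (A : Finset (Fin n)) : Prop :=
  1 ≤ e ∧ e ≤ g + 1 ∧ 0 ≤ h ∧ h ≤ g + 1 - e ∧
    ¬(e = 2 ∧ h = 0 ∧ A = ∅) ∧ ¬(e = 2 ∧ h = g - 1 ∧ A = Finset.univ)

/-- the case analysis in Proposition prop31 for type `(g,1)`:
the pair `(C, B₀) = (m(4,0,∅), m(3,0,∅))` is determined by `d - A mod 4`,
where `A = m(2,0,{1})`. -/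
theorem prop31_case_analysis (d g : ℤ) (hg : 2 ≤ g)
    (m : ℤ → ℤ → Finset (Fin 1) → ℤ)
    (hcompl : ∀ e h A, StabDom g 1 e h A →
      m e h A + m e (g + 1 - e - h) Aᶜ = d + 1 - e)
    (h30 : 2 * m 3 0 ∅ ≤ m 4 0 ∅ ∧ m 4 0 ∅ ≤ 2 * m 3 0 ∅ + 1)
    (h41 : m 4 0 {0} = d - 3 - m 4 0 ∅)
    (h41' : m 2 0 {0} + m 4 0 ∅ ≤ m 4 0 {0} ∧
      m 4 0 {0} ≤ m 2 0 {0} + m 4 0 ∅ + 1) :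
    ((d - m 2 0 {0}) % 4 = 0 →
        m 4 0 ∅ = (d - m 2 0 {0} - 4) / 2 ∧ m 3 0 ∅ = (d - m 2 0 {0} - 4) / 4) ∧
    ((d - m 2 0 {0}) % 4 = 1 →
        m 4 0 ∅ = (d - m 2 0 {0} - 3) / 2 ∧ m 3 0 ∅ = (d - m 2 0 {0} - 5) / 4) ∧
    ((d - m 2 0 {0}) % 4 = 2 →
        m 4 0 ∅ = (d - m 2 0 {0} - 4) / 2 ∧ m 3 0 ∅ = (d - m 2 0 {0} - 6) / 4) ∧
    ((d - m 2 0 {0}) % 4 = 3 →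
        m 4 0 ∅ = (d - m 2 0 {0} - 3) / 2 ∧ m 3 0 ∅ = (d - m 2 0 {0} - 3) / 4) := by
  obtain ⟨h1,h2⟩ := h30
  obtain ⟨h3,h4⟩ := h41'
  omega
end
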